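/- Let G be an abelian group with an outer action α on a ring R. Then the skew group ring R*_α G is a simple ring if and only if R is G-simple. -/

import Mathlib

/-- `S` is a skew group ring `R*_α G`: the ring hom `ι : R →+* S` and the monoid hom
`σ : G →* S` realize `R` and `G` inside `S`, every element of `S` is uniquely a finite
sum `∑_g ι(r_g) * σ(g)` (so `S` is a free left `R`-module with basis the image of `G`),
and multiplication is twisted by the action: `σ(g) * ι(r) = ι(α(g)(r)) * σ(g)`. -/
structure IsSkewGroupRing (R : Type*) [Ring R] (G : Type*) [Group G]
    (α : G →* RingAut R) (S : Type*) [Ring S] (ι : R →+* S) (σ : G →* S) : Prop where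
  repr_existsUnique : ∀ s : S, ∃! c : G →₀ R, s = c.sum fun g r => ι r * σ g
  commutes : ∀ (g : G) (r : R), σ g * ι r = ι (α g r) * σ g

/-- `R` is `G`-simple (with respect to the action `α : G →* RingAut R`): `R` is nonzero
and the only `G`-invariant two-sided ideals of `R` are `0` and `R`. -/
def IsGSimple (R : Type*) [Ring R] {G : Type*} [Group G] (α : G →* RingAut R) : Prop :=
  Nontrivial R ∧
    ∀ I : TwoSidedIdeal R, (∀ (g : G), ∀ r ∈ I, α g r ∈ I) → I = ⊥ ∨ I = ⊤

/-- The action `α` is outer if the identity is the only element of `G` mapping to an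
inner automorphism of `R` (i.e. one of the form `r ↦ u⁻¹ * r * u` for a unit `u`). -/
def IsOuterAction {R : Type*} [Ring R] {G : Type*} [Group G] (α : G →* RingAut R) : Prop :=
  ∀ g : G, (∃ u : Rˣ, ∀ r : R, α g r = ↑u⁻¹ * r * ↑u) → g = 1

section Aux

variable {R : Type*} [Ring R] {G : Type*} [Group G] {α : G →* RingAut R}
  {S : Type*} [Ring S] {ι : R →+* S} {σ : G →* S}

namespace IsSkewGroupRing

/-- The coefficient finsupp of an element of a skew group ring. -/
noncomputable def coeff (hS : IsSkewGroupRing R G α S ι σ) (s : S) : G →₀ R :=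
  (hS.repr_existsUnique s).choose

variable (hS : IsSkewGroupRing R G α S ι σ)

lemma coeff_spec (s : S) : s = (hS.coeff s).sum fun g r => ι r * σ g :=
  (hS.repr_existsUnique s).choose_spec.1

lemma coeff_unique {s : S} {d : G →₀ R} (h : s = d.sum fun g r => ι r * σ g) :
    hS.coeff s = d :=
  ((hS.repr_existsUnique s).choose_spec.2 d h).symm

lemma coeff_term (r : R) (g : G) : hS.coeff (ι r * σ g) = Finsupp.single g r :=
  hS.coeff_unique (by rw [Finsupp.sum_single_index (by simp)])

lemma coeff_add (s t : S) : hS.coeff (s + t) = hS.coeff s + hS.coeff t :=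
  hS.coeff_unique (by
    rw [Finsupp.sum_add_index' (fun g => by simp) (fun g b₁ b₂ => by rw [map_add, add_mul]),
      ← hS.coeff_spec, ← hS.coeff_spec])

/-- `coeff` as an additive monoid hom. -/
noncomputable def coeffHom : S →+ (G →₀ R) :=
  AddMonoidHom.mk' hS.coeff hS.coeff_add

@[simp] lemma coeffHom_apply (s : S) : hS.coeffHom s = hS.coeff s := rfl

lemma coeff_zero : hS.coeff (0 : S) = 0 := map_zero hS.coeffHom

lemma coeff_neg (s : S) : hS.coeff (-s) = -hS.coeff s := map_neg hS.coeffHom s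

lemma coeff_sub (s t : S) : hS.coeff (s - t) = hS.coeff s - hS.coeff t :=
  map_sub hS.coeffHom s t

lemma eq_zero_of_coeff_eq_zero {s : S} (h : hS.coeff s = 0) : s = 0 := by
  rw [hS.coeff_spec s, h, Finsupp.sum_zero_index]

lemma coeff_finsetSum {κ : Type*} (t : Finset κ) (v : κ → R) (τ : κ → G) :
    hS.coeff (∑ i ∈ t, ι (v i) * σ (τ i)) = ∑ i ∈ t, Finsupp.single (τ i) (v i) := by
  rw [← hS.coeffHom_apply, map_sum]
  exact Finset.sum_congr rfl fun i _ => hS.coeff_term _ _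

lemma coeff_sum_apply {κ : Type*} (t : Finset κ) (f : κ → S) (g : G) :
    hS.coeff (∑ i ∈ t, f i) g = ∑ i ∈ t, hS.coeff (f i) g := by
  rw [← hS.coeffHom_apply, map_sum, Finset.sum_apply']
  rfl

lemma sum_single_eval {M : Type*} [AddCommMonoid M] {κ : Type*} (t : Finset κ) (τ : κ → G)
    (w : κ → M) (g : G) (a : κ) (hτ : ∀ i, τ i = g ↔ i = a) (h0 : a ∉ t → w a = 0) :
    (∑ i ∈ t, Finsupp.single (τ i) (w i)) g = w a := by
  rw [Finset.sum_apply',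
    Finset.sum_eq_single a (fun b _ hb => Finsupp.single_eq_of_ne' fun hc => hb ((hτ b).mp hc))
      (fun ha => by rw [h0 ha, Finsupp.single_zero, Finsupp.coe_zero, Pi.zero_apply]),
    (hτ a).mpr rfl, Finsupp.single_eq_same]

lemma coeff_iota_mul (r : R) (s : S) (g : G) :
    hS.coeff (ι r * s) g = r * hS.coeff s g := by
  have h1 : ι r * s = ∑ h ∈ (hS.coeff s).support, ι (r * hS.coeff s h) * σ h := by
    conv_lhs => rw [hS.coeff_spec s]
    rw [Finsupp.sum, Finset.mul_sum]
    exact Finset.sum_congr rfl fun h _ => by rw [← mul_assoc, ← map_mul]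
  rw [h1, hS.coeff_finsetSum,
    sum_single_eval _ _ _ g g (fun i => Iff.rfl)
      (fun hg => by rw [Finsupp.notMem_support_iff.mp hg, mul_zero])]

lemma coeff_mul_iota (s : S) (r : R) (g : G) :
    hS.coeff (s * ι r) g = hS.coeff s g * α g r := by
  have h1 : s * ι r = ∑ h ∈ (hS.coeff s).support, ι (hS.coeff s h * α h r) * σ h := by
    conv_lhs => rw [hS.coeff_spec s]
    rw [Finsupp.sum, Finset.sum_mul]
    exact Finset.sum_congr rfl fun h _ => by
      rw [mul_assoc, hS.commutes, ← mul_assoc, ← map_mul]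
  rw [h1, hS.coeff_finsetSum,
    sum_single_eval _ _ _ g g (fun i => Iff.rfl)
      (fun hg => by rw [Finsupp.notMem_support_iff.mp hg, zero_mul])]

lemma coeff_mul_sigma (s : S) (k : G) (g : G) :
    hS.coeff (s * σ k) g = hS.coeff s (g * k⁻¹) := by
  have h1 : s * σ k = ∑ h ∈ (hS.coeff s).support, ι (hS.coeff s h) * σ (h * k) := by
    conv_lhs => rw [hS.coeff_spec s]
    rw [Finsupp.sum, Finset.sum_mul]
    exact Finset.sum_congr rfl fun h _ => by rw [map_mul, mul_assoc]
  rw [h1, hS.coeff_finsetSum,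
    sum_single_eval _ _ _ g (g * k⁻¹) (fun i => eq_mul_inv_iff_mul_eq.symm)
      (fun hg => Finsupp.notMem_support_iff.mp hg)]

lemma coeff_sigma_mul (k : G) (s : S) (g : G) :
    hS.coeff (σ k * s) g = α k (hS.coeff s (k⁻¹ * g)) := by
  have h1 : σ k * s = ∑ h ∈ (hS.coeff s).support, ι (α k (hS.coeff s h)) * σ (k * h) := by
    conv_lhs => rw [hS.coeff_spec s]
    rw [Finsupp.sum, Finset.mul_sum]
    exact Finset.sum_congr rfl fun h _ => by
      rw [← mul_assoc, hS.commutes, mul_assoc, ← map_mul]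
  rw [h1, hS.coeff_finsetSum,
    sum_single_eval _ _ _ g (k⁻¹ * g) (fun i => eq_inv_mul_iff_mul_eq.symm)
      (fun hg => by rw [Finsupp.notMem_support_iff.mp hg, map_zero])]

lemma coeff_one : hS.coeff (1 : S) = Finsupp.single 1 1 := by
  have := hS.coeff_term 1 1
  rwa [map_one, map_one, one_mul] at this

include hS in
lemma iota_eq_zero {r : R} (h : ι r = 0) : r = 0 := by
  have h2 := hS.coeff_term r 1
  rw [map_one, mul_one, h, hS.coeff_zero] at h2
  exact Finsupp.single_eq_zero.mp h2.symm

lemma ne_zero_of_coeff_ne_zero {s : S} {g : G} (h : hS.coeff s g ≠ 0) : s ≠ 0 := by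
  intro hs
  rw [hs, hS.coeff_zero] at h
  exact h rfl

end IsSkewGroupRing

end Aux

/-- If `G` is an abelian group with outer action `α` on `R`, then the skew group ring
`R*_α G` is simple if and only if `R` is `G`-simple. -/
theorem skewGroupRing_isSimpleRing_iff_isGSimple_of_abelian_outer
    {R : Type*} [Ring R] {G : Type*} [CommGroup G] (α : G →* RingAut R)
    (houter : IsOuterAction α)
    {S : Type*} [Ring S] (ι : R →+* S) (σ : G →* S)
    (hS : IsSkewGroupRing R G α S ι σ) :
    IsSimpleRing S ↔ IsGSimple R α := by
  classical
  have halpha_one : ∀ r : R, α 1 r = r := fun r => by rw [map_one]; rfl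
  constructor
  · rintro ⟨hsimple⟩
    -- first, R is nontrivial
    have hSnt : Nontrivial S := by
      by_contra hnt
      rw [not_nontrivial_iff_subsingleton] at hnt
      have : (⊥ : TwoSidedIdeal S) = ⊤ :=
        SetLike.ext fun x => by
          simp [TwoSidedIdeal.mem_bot, TwoSidedIdeal.mem_top, Subsingleton.elim x 0]
      exact hsimple.bot_ne_top this
    have hRnt : Nontrivial R := by
      by_contra h
      rw [not_nontrivial_iff_subsingleton] at h
      refine (not_subsingleton_iff_nontrivial.mpr hSnt) ⟨fun s t => ?_⟩
      have hz : ∀ s : S, s = 0 := fun s => by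
        rw [hS.coeff_spec s, Subsingleton.elim (hS.coeff s) 0, Finsupp.sum_zero_index]
      rw [hz s, hz t]
    refine ⟨hRnt, fun I hGinv => ?_⟩
    by_contra hI
    push_neg at hI
    obtain ⟨hIbot, hItop⟩ := hI
    -- the induced ideal of S
    set J : TwoSidedIdeal S := TwoSidedIdeal.mk' {s : S | ∀ g : G, hS.coeff s g ∈ I}
      (fun g => by rw [hS.coeff_zero]; exact I.zero_mem)
      (fun {x y} hx hy g => by rw [hS.coeff_add]; exact I.add_mem (hx g) (hy g))
      (fun {x} hx g => by rw [hS.coeff_neg]; exact I.neg_mem (hx g))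
      (fun {x y} hy g => by
        -- x * y, y has coefficients in I
        have hxy : x * y = ∑ h ∈ (hS.coeff x).support, ι (hS.coeff x h) * σ h * y := by
          conv_lhs => rw [hS.coeff_spec x]
          rw [Finsupp.sum, Finset.sum_mul]
        rw [hxy, hS.coeff_sum_apply]
        refine TwoSidedIdeal.finsetSum_mem _ _ _ fun h _ => ?_
        rw [mul_assoc, hS.coeff_iota_mul, hS.coeff_sigma_mul]
        exact I.mul_mem_left _ _ (hGinv h _ (hy _)))
      (fun {x y} hx g => by
        have hxy : x * y = ∑ h ∈ (hS.coeff y).support, x * (ι (hS.coeff y h) * σ h) := by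
          conv_lhs => rw [hS.coeff_spec y]
          rw [Finsupp.sum, Finset.mul_sum]
        rw [hxy, hS.coeff_sum_apply]
        refine TwoSidedIdeal.finsetSum_mem _ _ _ fun h _ => ?_
        rw [← mul_assoc, hS.coeff_mul_sigma, hS.coeff_mul_iota]
        exact I.mul_mem_right _ _ (hx _)) with hJdef
    have hmemJ : ∀ s : S, s ∈ J ↔ ∀ g : G, hS.coeff s g ∈ I := fun s =>
      TwoSidedIdeal.mem_mk' _ _ _ _ _ _ s
    -- J is neither ⊥ nor ⊤
    obtain ⟨r, hrI, hr0⟩ : ∃ r, r ∈ I ∧ r ≠ 0 := by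
      by_contra h
      push_neg at h
      exact hIbot (SetLike.ext fun x =>
        ⟨fun hx => (TwoSidedIdeal.mem_bot _).mpr (h x hx),
         fun hx => by rw [(TwoSidedIdeal.mem_bot _).mp hx]; exact I.zero_mem⟩)
    have hJbot : J ≠ ⊥ := by
      intro hJ
      have hmem : ι r ∈ J := by
        rw [hmemJ]
        intro g
        have : hS.coeff (ι r) = Finsupp.single 1 r := by
          have := hS.coeff_term r 1
          rwa [map_one, mul_one] at this
        rw [this]
        rcases eq_or_ne 1 g with h1 | h1
        · rw [← h1, Finsupp.single_eq_same]; exact hrI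
        · rw [Finsupp.single_eq_of_ne' h1]; exact I.zero_mem
      rw [hJ, TwoSidedIdeal.mem_bot] at hmem
      exact hr0 (hS.iota_eq_zero hmem)
    have hJtop : J ≠ ⊤ := by
      intro hJ
      have : (1 : S) ∈ J := by rw [hJ]; exact TwoSidedIdeal.mem_top _
      rw [hmemJ] at this
      have h1 := this 1
      rw [hS.coeff_one, Finsupp.single_eq_same] at h1
      exact hItop (I.eq_top h1)
    rcases hsimple.eq_bot_or_eq_top J with h | h
    · exact hJbot h
    · exact hJtop h
  · rintro ⟨hRnt, hGsimp⟩
    have hSnt : Nontrivial S := by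
      refine ⟨1, 0, fun h => ?_⟩
      have := hS.coeff_one
      rw [h, hS.coeff_zero] at this
      exact one_ne_zero (Finsupp.single_eq_zero.mp this.symm)
    have hnt : Nontrivial (TwoSidedIdeal S) := by
      refine ⟨⊥, ⊤, fun h => ?_⟩
      have : (1 : S) ∈ (⊥ : TwoSidedIdeal S) := by rw [h]; exact TwoSidedIdeal.mem_top _
      exact one_ne_zero ((TwoSidedIdeal.mem_bot _).mp this)
    refine ⟨{ toNontrivial := hnt, eq_bot_or_eq_top := fun J => ?_ }⟩
    by_cases hJbot : J = ⊥
    · exact Or.inl hJbot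
    right
    -- find a nonzero element of minimal support
    obtain ⟨x₀, hx₀J, hx₀⟩ : ∃ x, x ∈ J ∧ x ≠ 0 := by
      by_contra h
      push_neg at h
      exact hJbot (SetLike.ext fun x =>
        ⟨fun hx => (TwoSidedIdeal.mem_bot _).mpr (h x hx),
         fun hx => by rw [(TwoSidedIdeal.mem_bot _).mp hx]; exact J.zero_mem⟩)
    set P : Set ℕ := {n | ∃ z, z ∈ J ∧ z ≠ 0 ∧ (hS.coeff z).support.card = n} with hPdef
    have hPne : P.Nonempty := ⟨_, x₀, hx₀J, hx₀, rfl⟩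
    set n : ℕ := sInf P with hn
    obtain ⟨x, hxJ, hx0, hxcard⟩ : ∃ z, z ∈ J ∧ z ≠ 0 ∧ (hS.coeff z).support.card = n :=
      Nat.sInf_mem hPne
    have hmin : ∀ z, z ∈ J → z ≠ 0 → n ≤ (hS.coeff z).support.card :=
      fun z hz hz0 => Nat.sInf_le ⟨z, hz, hz0, rfl⟩
    -- normalize so that 1 is in the support
    obtain ⟨g₀, hg₀⟩ : ((hS.coeff x).support).Nonempty := by
      rw [Finsupp.support_nonempty_iff]
      intro h
      exact hx0 (hS.eq_zero_of_coeff_eq_zero h)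
    set x' : S := x * σ g₀⁻¹ with hx'def
    have hx'J : x' ∈ J := J.mul_mem_right _ _ hxJ
    have hx'coeff : ∀ g, hS.coeff x' g = hS.coeff x (g * g₀) := fun g => by
      rw [hx'def, hS.coeff_mul_sigma, inv_inv]
    set T : Finset G := (hS.coeff x').support with hT
    have h1T : (1 : G) ∈ T := by
      rw [hT, Finsupp.mem_support_iff, hx'coeff, one_mul]
      exact Finsupp.mem_support_iff.mp hg₀
    have hx'0 : x' ≠ 0 :=
      hS.ne_zero_of_coeff_ne_zero (g := 1) (by
        rw [hx'coeff, one_mul]; exact Finsupp.mem_support_iff.mp hg₀)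
    have hTcard : T.card = n := by
      refine le_antisymm ?_ (hmin x' hx'J hx'0)
      have hsub : T ⊆ (hS.coeff x).support.image (· * g₀⁻¹) := by
        intro g hg
        rw [Finset.mem_image]
        refine ⟨g * g₀, ?_, by rw [mul_inv_cancel_right]⟩
        rw [Finsupp.mem_support_iff, ← hx'coeff]
        exact Finsupp.mem_support_iff.mp (hT ▸ hg)
      calc T.card ≤ _ := Finset.card_le_card hsub
        _ ≤ (hS.coeff x).support.card := Finset.card_image_le
        _ = n := hxcard
    -- minimality: anything in J supported in T.erase 1 is zero
    have hM : ∀ z, z ∈ J → (∀ g, g ∉ T.erase 1 → hS.coeff z g = 0) → z = 0 := by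
      intro z hz hsupp
      by_contra hz0
      have h1 : (hS.coeff z).support ⊆ T.erase 1 := by
        intro g hg
        by_contra hgT
        exact Finsupp.mem_support_iff.mp hg (hsupp g hgT)
      have h2 := hmin z hz hz0
      have h3 : (hS.coeff z).support.card ≤ (T.erase 1).card := Finset.card_le_card h1
      rw [Finset.card_erase_of_mem h1T, hTcard] at h3
      have hn1 : 1 ≤ n := by
        rw [← hTcard]
        exact Finset.card_pos.mpr ⟨1, h1T⟩
      omega
    -- the ideal of leading coefficients
    set I₀ : TwoSidedIdeal R := TwoSidedIdeal.mk'
      {a : R | ∃ z, z ∈ J ∧ (hS.coeff z).support ⊆ T ∧ hS.coeff z 1 = a}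
      ⟨0, J.zero_mem, by rw [hS.coeff_zero]; simp⟩
      (fun {a b} ⟨z, hz, hzT, hza⟩ ⟨z', hz', hz'T, hz'b⟩ =>
        ⟨z + z', J.add_mem hz hz', by
          rw [hS.coeff_add]
          exact (Finsupp.support_add).trans (Finset.union_subset hzT hz'T), by
          rw [hS.coeff_add, Finsupp.add_apply, hza, hz'b]⟩)
      (fun {a} ⟨z, hz, hzT, hza⟩ =>
        ⟨-z, J.neg_mem hz, by rw [hS.coeff_neg, Finsupp.support_neg]; exact hzT, by
          rw [hS.coeff_neg, Finsupp.neg_apply, hza]⟩)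
      (fun {r a} ⟨z, hz, hzT, hza⟩ =>
        ⟨ι r * z, J.mul_mem_left _ _ hz, by
          intro g hg
          rw [Finsupp.mem_support_iff, hS.coeff_iota_mul] at hg
          refine hzT (Finsupp.mem_support_iff.mpr fun h => hg ?_)
          rw [h, mul_zero], by
          rw [hS.coeff_iota_mul, hza]⟩)
      (fun {a r} ⟨z, hz, hzT, hza⟩ =>
        ⟨z * ι r, J.mul_mem_right _ _ hz, by
          intro g hg
          rw [Finsupp.mem_support_iff, hS.coeff_mul_iota] at hg
          refine hzT (Finsupp.mem_support_iff.mpr fun h => hg ?_)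
          rw [h, zero_mul], by
          rw [hS.coeff_mul_iota, hza, halpha_one]⟩)
      with hI₀def
    have hmemI₀ : ∀ a : R, a ∈ I₀ ↔
        ∃ z, z ∈ J ∧ (hS.coeff z).support ⊆ T ∧ hS.coeff z 1 = a := fun a =>
      TwoSidedIdeal.mem_mk' _ _ _ _ _ _ a
    -- conjugation computation
    have hconj : ∀ (g : G) (z : S) (h : G),
        hS.coeff (σ g * z * σ g⁻¹) h = α g (hS.coeff z h) := by
      intro g z h
      rw [hS.coeff_mul_sigma, inv_inv, hS.coeff_sigma_mul]
      congr 2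
      rw [mul_comm h g, ← mul_assoc, inv_mul_cancel, one_mul]
    -- I₀ is G-invariant
    have hGinvI₀ : ∀ (g : G), ∀ a ∈ I₀, α g a ∈ I₀ := by
      intro g a ha
      rw [hmemI₀] at ha ⊢
      obtain ⟨z, hz, hzT, hza⟩ := ha
      refine ⟨σ g * z * σ g⁻¹, J.mul_mem_right _ _ (J.mul_mem_left _ _ hz), ?_, ?_⟩
      · intro h hh
        rw [Finsupp.mem_support_iff, hconj] at hh
        refine hzT (Finsupp.mem_support_iff.mpr fun hc => hh ?_)
        rw [hc, map_zero]
      · rw [hconj, hza]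
    -- I₀ is nonzero, hence ⊤
    have hI₀top : I₀ = ⊤ := by
      rcases hGsimp I₀ hGinvI₀ with h | h
      · exfalso
        have : hS.coeff x' 1 ∈ I₀ := (hmemI₀ _).mpr ⟨x', hx'J, hT ▸ subset_rfl, rfl⟩
        rw [h, TwoSidedIdeal.mem_bot] at this
        exact Finsupp.mem_support_iff.mp h1T this
      · exact h
    -- obtain y with coefficient 1 at 1
    obtain ⟨y, hyJ, hyT, hy1⟩ : ∃ z, z ∈ J ∧ (hS.coeff z).support ⊆ T ∧ hS.coeff z 1 = 1 := by
      rw [← hmemI₀, hI₀top]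
      exact TwoSidedIdeal.mem_top _
    have hy0 : y ≠ 0 := hS.ne_zero_of_coeff_ne_zero (g := 1) (by rw [hy1]; exact one_ne_zero)
    have hysupp : (hS.coeff y).support = T :=
      Finset.eq_of_subset_of_card_le hyT (by rw [hTcard]; exact hmin y hyJ hy0)
    -- every element of T is 1
    have hTone : ∀ h ∈ T, h = 1 := by
      intro h hhT
      by_contra hne
      set u : R := hS.coeff y h with hu
      have hu0 : u ≠ 0 := Finsupp.mem_support_iff.mp (hysupp ▸ hhT)
      -- relation r * u = u * α h r
      have rel1 : ∀ r : R, r * u = u * α h r := by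
        intro r
        set z : S := ι r * y - y * ι r with hz
        have hzJ : z ∈ J := J.sub_mem (J.mul_mem_left _ _ hyJ) (J.mul_mem_right _ _ hyJ)
        have hzc : ∀ g, hS.coeff z g = r * hS.coeff y g - hS.coeff y g * α g r := by
          intro g
          rw [hz, hS.coeff_sub, Finsupp.sub_apply, hS.coeff_iota_mul, hS.coeff_mul_iota]
        have hz0 : z = 0 := by
          refine hM z hzJ fun g hg => ?_
          rw [hzc]
          rcases eq_or_ne g 1 with rfl | hg1
          · rw [hy1, one_mul, mul_one, halpha_one, sub_self]
          · have hgT : g ∉ T := fun hgT => hg (Finset.mem_erase.mpr ⟨hg1, hgT⟩)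
            have : hS.coeff y g = 0 := by
              rw [← Finsupp.notMem_support_iff, hysupp]; exact hgT
            rw [this, mul_zero, zero_mul, sub_self]
        have := hzc h
        rw [hz0, hS.coeff_zero, Finsupp.coe_zero, Pi.zero_apply, ← hu] at this
        exact sub_eq_zero.mp this.symm
      -- u is G-fixed
      have rel2 : ∀ g : G, α g u = u := by
        intro g
        set w : S := σ g * y * σ g⁻¹ with hw
        have hwJ : w ∈ J := J.mul_mem_right _ _ (J.mul_mem_left _ _ hyJ)
        have hwc : ∀ h', hS.coeff w h' = α g (hS.coeff y h') := fun h' => hconj g y h'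
        have hwy : w = y := by
          have h0 : w - y = 0 := by
            refine hM _ (J.sub_mem hwJ hyJ) fun g' hg' => ?_
            rw [hS.coeff_sub, Finsupp.sub_apply, hwc]
            rcases eq_or_ne g' 1 with rfl | hg1
            · rw [hy1, map_one, sub_self]
            · have hgT : g' ∉ T := fun hgT => hg' (Finset.mem_erase.mpr ⟨hg1, hgT⟩)
              have : hS.coeff y g' = 0 := by
                rw [← Finsupp.notMem_support_iff, hysupp]; exact hgT
              rw [this, map_zero, sub_self]
          exact sub_eq_zero.mp h0
        have := hwc h
        rw [hwy, ← hu] at this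
        exact this.symm
      -- the ideal R*u is G-invariant and nonzero
      have hmul_right_u : ∀ t : R, u * t = ((α h).symm t) * u := by
        intro t
        rw [rel1 ((α h).symm t), RingEquiv.apply_symm_apply]
      set I₁ : TwoSidedIdeal R := TwoSidedIdeal.mk' {b : R | ∃ r : R, b = r * u}
        ⟨0, (zero_mul u).symm⟩
        (fun {a b} ⟨r, hr⟩ ⟨r', hr'⟩ => ⟨r + r', by rw [hr, hr', add_mul]⟩)
        (fun {a} ⟨r, hr⟩ => ⟨-r, by rw [hr, neg_mul]⟩)
        (fun {t b} ⟨r, hr⟩ => ⟨t * r, by rw [hr, mul_assoc]⟩)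
        (fun {b t} ⟨r, hr⟩ => ⟨r * (α h).symm t, by
          rw [hr, mul_assoc, hmul_right_u, mul_assoc]⟩)
        with hI₁def
      have hmemI₁ : ∀ b : R, b ∈ I₁ ↔ ∃ r : R, b = r * u := fun b =>
        TwoSidedIdeal.mem_mk' _ _ _ _ _ _ b
      have hI₁top : I₁ = ⊤ := by
        rcases hGsimp I₁ (fun g b hb => by
          rw [hmemI₁] at hb ⊢
          obtain ⟨r, rfl⟩ := hb
          exact ⟨α g r, by rw [map_mul, rel2]⟩) with hc | hc
        · exfalso
          have : u ∈ I₁ := (hmemI₁ u).mpr ⟨1, (one_mul u).symm⟩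
          rw [hc, TwoSidedIdeal.mem_bot] at this
          exact hu0 this
        · exact hc
      obtain ⟨v, hv⟩ : ∃ r : R, (1 : R) = r * u := by
        rw [← hmemI₁, hI₁top]; exact TwoSidedIdeal.mem_top _
      -- the ideal u*R
      set I₂ : TwoSidedIdeal R := TwoSidedIdeal.mk' {b : R | ∃ r : R, b = u * r}
        ⟨0, (mul_zero u).symm⟩
        (fun {a b} ⟨r, hr⟩ ⟨r', hr'⟩ => ⟨r + r', by rw [hr, hr', mul_add]⟩)
        (fun {a} ⟨r, hr⟩ => ⟨-r, by rw [hr, mul_neg]⟩)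
        (fun {t b} ⟨r, hr⟩ => ⟨α h t * r, by
          rw [hr, ← mul_assoc, rel1, mul_assoc]⟩)
        (fun {b t} ⟨r, hr⟩ => ⟨r * t, by rw [hr, mul_assoc]⟩)
        with hI₂def
      have hmemI₂ : ∀ b : R, b ∈ I₂ ↔ ∃ r : R, b = u * r := fun b =>
        TwoSidedIdeal.mem_mk' _ _ _ _ _ _ b
      have hI₂top : I₂ = ⊤ := by
        rcases hGsimp I₂ (fun g b hb => by
          rw [hmemI₂] at hb ⊢
          obtain ⟨r, rfl⟩ := hb
          exact ⟨α g r, by rw [map_mul, rel2]⟩) with hc | hc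
        · exfalso
          have : u ∈ I₂ := (hmemI₂ u).mpr ⟨1, (mul_one u).symm⟩
          rw [hc, TwoSidedIdeal.mem_bot] at this
          exact hu0 this
        · exact hc
      obtain ⟨w, hwu⟩ : ∃ r : R, (1 : R) = u * r := by
        rw [← hmemI₂, hI₂top]; exact TwoSidedIdeal.mem_top _
      have hvw : v = w := by
        calc v = v * (u * w) := by rw [← hwu, mul_one]
          _ = (v * u) * w := by rw [mul_assoc]
          _ = w := by rw [← hv, one_mul]
      -- u is a unit implementing α h as inner, contradiction with outerness
      have hwu1 : w * u = 1 := by rw [← hvw, ← hv]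
      have huw1 : u * w = 1 := hwu.symm
      set U : Rˣ := ⟨u, w, huw1, hwu1⟩ with hU
      refine hne (houter h ⟨U, fun r => ?_⟩)
      have hUinv : ((U⁻¹ : Rˣ) : R) = w := rfl
      rw [hUinv]
      show α h r = w * r * u
      calc α h r = (w * u) * α h r := by rw [hwu1, one_mul]
        _ = w * (u * α h r) := by rw [mul_assoc]
        _ = w * (r * u) := by rw [rel1]
        _ = w * r * u := by rw [mul_assoc]
    -- conclude T = {1} and y = 1
    have hTsing : T = {1} := Finset.eq_singleton_iff_unique_mem.mpr ⟨h1T, hTone⟩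
    have hycoeff : hS.coeff y = Finsupp.single 1 1 := by
      ext g
      rcases eq_or_ne g 1 with rfl | hg
      · rw [hy1, Finsupp.single_eq_same]
      · rw [Finsupp.single_eq_of_ne' (Ne.symm hg), ← Finsupp.notMem_support_iff, hysupp, hTsing]
        simp [hg]
    have hyone : y = 1 := by
      rw [hS.coeff_spec y, hycoeff, Finsupp.sum_single_index (by simp), map_one, map_one, one_mul]
    exact J.eq_top (hyone ▸ hyJ)
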